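/- Let G be a topological group and d a right-invariant metric on G compatible with its topology. A net (μ_i)_{i∈I} of Borel probability measures on G UEB-converges to invariance over G if and only if for every g ∈ G, the mass transportation distance d_MT((λ_g)_*(μ_i), μ_i) converges to 0. -/

import Mathlib

open Filter Topology MeasureTheory Pointwise

/-- A net `(μ i)` of Borel probability measures on a topological group `G`
UEB-converges to invariance if, for every `g ∈ G` and every norm-bounded,
right-uniformly equicontinuous family `H` of bounded right-uniformly continuous
real-valued functions on `G`, `sup_{f ∈ H} |∫ f ∘ λ_g dμ_i − ∫ f dμ_i| → 0`. -/
def UEBConvergesToInvariance {G ι : Type*} [Group G] [TopologicalSpace G]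
    [MeasurableSpace G] (l : Filter ι) (μ : ι → Measure G) : Prop :=
  ∀ (g : G) (H : Set (G → ℝ)),
    (∃ C : ℝ, ∀ f ∈ H, ∀ x, |f x| ≤ C) →
    (∀ ε > 0, ∃ U ∈ 𝓝 (1 : G), ∀ f ∈ H, ∀ x y : G, y * x⁻¹ ∈ U → |f x - f y| ≤ ε) →
    ∀ ε > 0, ∀ᶠ i in l, ∀ f ∈ H,
      |∫ x, f (g * x) ∂(μ i) - ∫ x, f x ∂(μ i)| ≤ ε

/-- For a right-invariant compatible metric `d` on a topological group `G`, a net of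
Borel probability measures UEB-converges to invariance iff it converges to invariance
in the mass transportation distance over `d`, i.e. uniformly over all `f` that are
1-Lipschitz w.r.t. `d` and bounded by 1 in sup-norm. -/
theorem stmt12 {G ι : Type*} [Group G] [TopologicalSpace G] [IsTopologicalGroup G]
    [MeasurableSpace G] [BorelSpace G]
    (d : G → G → ℝ)
    (hsymm : ∀ x y, d x y = d y x)
    (heq : ∀ x y, (d x y = 0 ↔ x = y))
    (htri : ∀ x y z, d x z ≤ d x y + d y z)
    (hinv : ∀ x y g : G, d (x * g) (y * g) = d x y)
    (hcompat : ∀ x : G, 𝓝 x = ⨅ ε ∈ Set.Ioi (0 : ℝ), Filter.principal {y | d x y < ε})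
    (l : Filter ι) (μ : ι → Measure G) (hprob : ∀ i, IsProbabilityMeasure (μ i)) :
    UEBConvergesToInvariance l μ ↔
      ∀ g : G, ∀ ε > 0, ∀ᶠ i in l, ∀ f : G → ℝ,
        (∀ x y, |f x - f y| ≤ d x y) → (∀ x, |f x| ≤ 1) →
        |∫ x, f (g * x) ∂(μ i) - ∫ x, f x ∂(μ i)| ≤ ε := by
  -- basic facts about d
  have dnn : ∀ x y, 0 ≤ d x y := by
    intro x y
    have h0 : d x x = 0 := (heq x x).2 rfl
    have h1 := htri x y x
    rw [h0, hsymm y x] at h1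
    linarith
  have hball : ∀ (x : G) (r : ℝ), 0 < r → {y | d x y < r} ∈ 𝓝 x := by
    intro x r hr
    rw [hcompat x]
    exact mem_iInf_of_mem r (mem_iInf_of_mem hr (mem_principal_self _))
  have hdinv : ∀ x y : G, d 1 (y * x⁻¹) = d x y := by
    intro x y
    have h1 := hinv x y x⁻¹
    rwa [mul_inv_cancel] at h1
  constructor
  · intro h g ε hε
    have key := h g {f | (∀ x y, |f x - f y| ≤ d x y) ∧ ∀ x, |f x| ≤ 1}
      ⟨1, fun f hf x => hf.2 x⟩ ?_ ε hε
    · filter_upwards [key] with i hi f h1 h2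
      exact hi f ⟨h1, h2⟩
    · intro ε' hε'
      refine ⟨{u | d 1 u < ε'}, hball 1 ε' hε', ?_⟩
      intro f hf x y hU
      calc |f x - f y| ≤ d x y := hf.1 x y
        _ = d 1 (y * x⁻¹) := (hdinv x y).symm
        _ ≤ ε' := le_of_lt hU
  · intro h g H hC0 hEq ε hε
    obtain ⟨C, hC⟩ := hC0
    set C' : ℝ := max C 1 with hC'def
    have hC'1 : (1:ℝ) ≤ C' := le_max_right _ _
    have hC'0 : (0:ℝ) < C' := lt_of_lt_of_le one_pos hC'1
    have hfC : ∀ f ∈ H, ∀ x, |f x| ≤ C' := fun f hf x => (hC f hf x).trans (le_max_left _ _)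
    have hε4 : 0 < ε/4 := by linarith
    obtain ⟨U, hU, hUp⟩ := hEq (ε/4) hε4
    -- extract δ > 0 with the d-ball around 1 contained in U
    rw [hcompat 1] at hU
    have hdir : DirectedOn ((fun r : ℝ => 𝓟 {y : G | d 1 y < r}) ⁻¹'o (· ≥ ·)) (Set.Ioi 0) := by
      intro a ha b hb
      refine ⟨min a b, Set.mem_Ioi.2 (lt_min ha hb), ?_, ?_⟩
      · exact principal_mono.2 fun y (hy : d 1 y < min a b) =>
          show d 1 y < a from lt_of_lt_of_le hy (min_le_left _ _)
      · exact principal_mono.2 fun y (hy : d 1 y < min a b) =>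
          show d 1 y < b from lt_of_lt_of_le hy (min_le_right _ _)
    obtain ⟨δ, hδ0, hδU⟩ :=
      (Filter.mem_biInf_of_directed hdir ⟨1, Set.mem_Ioi.2 one_pos⟩).1 hU
    rw [mem_principal] at hδU
    have hδ0 : (0:ℝ) < δ := hδ0
    have hP : ∀ f ∈ H, ∀ x y, d x y < δ → |f x - f y| ≤ ε/4 := by
      intro f hf x y hd
      apply hUp f hf x y
      apply hδU
      show d 1 (y * x⁻¹) < δ
      rwa [hdinv x y]
    -- continuity of members of H
    have hcont : ∀ f ∈ H, Continuous f := by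
      intro f hf
      rw [continuous_iff_continuousAt]
      intro x
      rw [ContinuousAt, Metric.tendsto_nhds]
      intro ε₀ hε₀
      obtain ⟨V, hV, hVp⟩ := hEq (ε₀/2) (by linarith)
      have hmem : {y : G | y * x⁻¹ ∈ V} ∈ 𝓝 x := by
        have hc : ContinuousAt (fun y : G => y * x⁻¹) x := (continuous_mul_right _).continuousAt
        exact hc.preimage_mem_nhds (by simpa using hV)
      filter_upwards [hmem] with y hy
      have h1 := hVp f hf x y hy
      rw [Real.dist_eq, abs_sub_comm]
      linarith
    -- constants for the Lipschitz regularization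
    set K : ℝ := 2 * C' / δ with hKdef
    have hK0 : (0:ℝ) < K := by positivity
    set M : ℝ := max K C' with hMdef
    have hMK : K ≤ M := le_max_left _ _
    have hMC : C' ≤ M := le_max_right _ _
    have hM0 : (0:ℝ) < M := lt_of_lt_of_le hC'0 hMC
    have hmain := h g (ε/(2*M)) (by positivity)
    filter_upwards [hmain] with i hi f hf
    haveI := hprob i
    -- Lipschitz regularization of f
    set f' : G → ℝ := fun x => ⨅ y, (f y + K * d x y) with hf'def
    have hbdd : ∀ x, BddBelow (Set.range fun y => f y + K * d x y) := by
      intro x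
      refine ⟨-C', ?_⟩
      rintro z ⟨y, rfl⟩
      show -C' ≤ f y + K * d x y
      have h1 := (abs_le.1 (hfC f hf y)).1
      nlinarith [mul_nonneg hK0.le (dnn x y)]
    have hle : ∀ x, f' x ≤ f x := by
      intro x
      have h1 := ciInf_le (hbdd x) x
      simpa [(heq x x).2 rfl] using h1
    have hge : ∀ x, f x - ε/4 ≤ f' x := by
      intro x
      refine le_ciInf fun y => ?_
      show f x - ε/4 ≤ f y + K * d x y
      by_cases hd : d x y < δ
      · have h1 := (abs_le.1 (hP f hf x y hd)).2
        linarith [mul_nonneg hK0.le (dnn x y)]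
      · push_neg at hd
        have h1 : 2 * C' ≤ K * d x y := by
          have h2 : K * δ ≤ K * d x y := by nlinarith
          have h3 : K * δ = 2 * C' := by rw [hKdef]; field_simp
          linarith
        have h4 := (abs_le.1 (hfC f hf x)).2
        have h5 := (abs_le.1 (hfC f hf y)).1
        linarith
    have habs' : ∀ x, |f' x| ≤ C' := by
      intro x
      rw [abs_le]
      constructor
      · refine le_ciInf fun y => ?_
        show -C' ≤ f y + K * d x y
        have h1 := (abs_le.1 (hfC f hf y)).1
        nlinarith [mul_nonneg hK0.le (dnn x y)]
      · exact (hle x).trans (abs_le.1 (hfC f hf x)).2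
    have hlip1 : ∀ x z, f' x ≤ f' z + K * d x z := by
      intro x z
      have h1 : f' x - K * d x z ≤ f' z := by
        refine le_ciInf fun y => ?_
        show f' x - K * d x z ≤ f y + K * d z y
        have h2 : f' x ≤ f y + K * d x y := ciInf_le (hbdd x) y
        have h3 : d x y ≤ d x z + d z y := htri x z y
        nlinarith
      linarith
    have hlip : ∀ x z, |f' x - f' z| ≤ K * d x z := by
      intro x z
      rw [abs_le]
      constructor
      · have h1 := hlip1 z x
        rw [hsymm z x] at h1
        linarith
      · have := hlip1 x z; linarith
    have hcont' : Continuous f' := by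
      rw [continuous_iff_continuousAt]
      intro x
      rw [ContinuousAt, Metric.tendsto_nhds]
      intro ε₀ hε₀
      filter_upwards [hball x (ε₀/(K+1)) (by positivity)] with y hy
      rw [Real.dist_eq]
      have h1 := hlip y x
      rw [hsymm y x] at h1
      have h2 : K * d x y < ε₀ := by
        have h3 : K * d x y ≤ K * (ε₀/(K+1)) := by nlinarith [dnn x y]
        have h4 : K * (ε₀/(K+1)) < ε₀ := by
          rw [← mul_div_assoc, div_lt_iff₀ (show (0:ℝ) < K+1 by positivity)]
          nlinarith
        linarith
      linarith
    -- scaled function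
    have hLip'' : ∀ x y : G, |f' x / M - f' y / M| ≤ d x y := by
      intro x y
      rw [div_sub_div_same, abs_div, abs_of_pos hM0, div_le_iff₀ hM0]
      calc |f' x - f' y| ≤ K * d x y := hlip x y
        _ ≤ d x y * M := by nlinarith [dnn x y]
    have hBdd'' : ∀ x : G, |f' x / M| ≤ 1 := by
      intro x
      rw [abs_div, abs_of_pos hM0, div_le_one hM0]
      exact (habs' x).trans hMC
    have key := hi (fun x => f' x / M) hLip'' hBdd''
    -- rewrite key in terms of f'
    have hdiv1 : ∫ x, f' (g * x) / M ∂(μ i) = (∫ x, f' (g * x) ∂(μ i)) / M := integral_div M _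
    have hdiv2 : ∫ x, f' x / M ∂(μ i) = (∫ x, f' x ∂(μ i)) / M := integral_div M _
    rw [hdiv1, hdiv2, div_sub_div_same, abs_div, abs_of_pos hM0, div_le_iff₀ hM0] at key
    have e2 : |∫ x, f' (g * x) ∂(μ i) - ∫ x, f' x ∂(μ i)| ≤ ε/2 := by
      have : ε/(2*M) * M = ε/2 := by field_simp
      linarith [key, this.symm.le]
    -- integrability
    have hint : ∀ (h₀ : G → ℝ), Continuous h₀ → (∀ x, |h₀ x| ≤ C') → Integrable h₀ (μ i) := by
      intro h₀ hc hb
      exact (integrable_const C').mono' hc.aestronglyMeasurable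
        (ae_of_all _ (by simpa [Real.norm_eq_abs] using hb))
    have hI1 : Integrable (fun x => f (g*x)) (μ i) :=
      hint _ ((hcont f hf).comp (continuous_mul_left g)) (fun x => hfC f hf _)
    have hI2 : Integrable f (μ i) := hint f (hcont f hf) (hfC f hf)
    have hI3 : Integrable (fun x => f' (g*x)) (μ i) :=
      hint _ (hcont'.comp (continuous_mul_left g)) (fun x => habs' _)
    have hI4 : Integrable f' (μ i) := hint f' hcont' habs'
    -- closeness of integrals
    have hclose : ∀ (p q : G → ℝ), Integrable p (μ i) → Integrable q (μ i) →
        (∀ x, |p x - q x| ≤ ε/4) → |∫ x, p x ∂(μ i) - ∫ x, q x ∂(μ i)| ≤ ε/4 := by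
      intro p q hp hq hpq
      rw [← integral_sub hp hq]
      calc |∫ x, (p x - q x) ∂(μ i)| ≤ ∫ x, |p x - q x| ∂(μ i) := by
            simpa [Real.norm_eq_abs] using
              norm_integral_le_integral_norm (μ := μ i) (fun x => p x - q x)
        _ ≤ ∫ _x, (ε/4 : ℝ) ∂(μ i) :=
            integral_mono (hp.sub hq).abs (integrable_const _) hpq
        _ = ε/4 := by simp
    have hpt : ∀ x, |f x - f' x| ≤ ε/4 := by
      intro x
      rw [abs_le]
      constructor
      · have := hle x; linarith
      · have := hge x; linarith
    have e1 : |∫ x, f (g*x) ∂(μ i) - ∫ x, f' (g*x) ∂(μ i)| ≤ ε/4 :=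
      hclose _ _ hI1 hI3 (fun x => hpt (g*x))
    have e3 : |∫ x, f' x ∂(μ i) - ∫ x, f x ∂(μ i)| ≤ ε/4 := by
      have := hclose _ _ hI4 hI2 (fun x => by rw [abs_sub_comm]; exact hpt x)
      exact this
    have tri1 := abs_sub_le (∫ x, f (g*x) ∂(μ i)) (∫ x, f' (g*x) ∂(μ i)) (∫ x, f x ∂(μ i))
    have tri2 := abs_sub_le (∫ x, f' (g*x) ∂(μ i)) (∫ x, f' x ∂(μ i)) (∫ x, f x ∂(μ i))
    linarith
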